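/- Let m > 1, K > 0, x₀ > 0, and set c = K^{m−1}. Define U_{x₀}(x,t) = [ K^{m−1} − ( (|x|/x₀) e^{−ct} )^{(m−1)/m} ]₊^{1/(m−1)} for (x,t) ∈ ℝ × (0,∞). Then U_{x₀} is continuous on ℝ × (0,∞) with U_{x₀}(0,t) = K for all t > 0, and on the open set { (x,t) : x ≠ 0 and K^{m−1} − ((|x|/x₀) e^{−ct})^{(m−1)/m} > 0 } it is a classical solution of the one-dimensional nonhomogeneous porous medium equation: ∂_t U_{x₀}(x,t) = x² ∂_xx(U_{x₀}^m)(x,t). -/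

import Mathlib

open Real Set Filter Topology

noncomputable section

/-- **Explicit profiles `U_{x₀}` (Eq. (1.17), cf. [GKKV, Section 7]).** Let `m > 1`,
`K > 0`, `x₀ > 0` and `c = K^{m-1}`.  Define
`U_{x₀}(x,t) = [K^{m-1} - ((|x|/x₀) e^{-ct})^{(m-1)/m}]₊^{1/(m-1)}`.  Then `U_{x₀}` is
continuous on `ℝ × (0,∞)` with `U_{x₀}(0,t) = K` for all `t > 0`, and on the open set
`{(x,t) : x ≠ 0, K^{m-1} - ((|x|/x₀) e^{-ct})^{(m-1)/m} > 0}` it is a classical solution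
of `∂ₜ U = x² ∂ₓₓ(U^m)`. -/
theorem explicit_profile_solution
    (m K x₀ c : ℝ) (hm : 1 < m) (hK : 0 < K) (hx₀ : 0 < x₀) (hc : c = K ^ (m - 1))
    (U : ℝ → ℝ → ℝ)
    (hU : ∀ x t, U x t =
      (max (K ^ (m - 1) - ((|x| / x₀) * Real.exp (-c * t)) ^ ((m - 1) / m)) 0)
        ^ (1 / (m - 1))) :
    ContinuousOn (fun p : ℝ × ℝ => U p.1 p.2) (univ ×ˢ Ioi 0) ∧
    (∀ t : ℝ, 0 < t → U 0 t = K) ∧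
    (∀ x t : ℝ, 0 < t → x ≠ 0 →
      0 < K ^ (m - 1) - ((|x| / x₀) * Real.exp (-c * t)) ^ ((m - 1) / m) →
      DifferentiableAt ℝ (fun τ => U x τ) t ∧
      DifferentiableAt ℝ (fun ξ => U ξ t ^ m) x ∧
      DifferentiableAt ℝ (deriv (fun ξ => U ξ t ^ m)) x ∧
      deriv (fun τ => U x τ) t = x ^ 2 * iteratedDeriv 2 (fun ξ => U ξ t ^ m) x) := by
  have hm0 : (0:ℝ) < m := lt_trans one_pos hm
  have hm1 : (0:ℝ) < m - 1 := by linarith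
  set A := K ^ (m - 1) with hA_def
  set α := (m - 1) / m with hα_def
  set P := 1 / (m - 1) with hP_def
  have hA : 0 < A := Real.rpow_pos_of_pos hK _
  have hα : 0 < α := div_pos hm1 hm0
  have hP : 0 < P := by rw [hP_def]; positivity
  refine ⟨?_, ?_, ?_⟩
  · -- continuity
    have hcont : Continuous fun pr : ℝ × ℝ => U pr.1 pr.2 := by
      have heq : (fun pr : ℝ × ℝ => U pr.1 pr.2)
          = fun pr : ℝ × ℝ =>
            (max (A - ((|pr.1| / x₀) * Real.exp (-c * pr.2)) ^ α) 0) ^ P :=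
        funext fun pr => hU pr.1 pr.2
      rw [heq]
      have h1 : Continuous fun pr : ℝ × ℝ => (|pr.1| / x₀) * Real.exp (-c * pr.2) :=
        ((continuous_abs.comp continuous_fst).div_const x₀).mul
          (Real.continuous_exp.comp (continuous_const.mul continuous_snd))
      exact ((continuous_const.sub (h1.rpow_const fun _ => Or.inr hα.le)).max
        continuous_const).rpow_const fun _ => Or.inr hP.le
    exact hcont.continuousOn
  · -- value at x = 0
    intro t ht
    rw [hU]
    rw [abs_zero, zero_div, zero_mul, Real.zero_rpow hα.ne', sub_zero,
      max_eq_left hA.le, hA_def, ← Real.rpow_mul hK.le]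
    rw [show (m - 1) * P = 1 by rw [hP_def]; field_simp]
    exact Real.rpow_one K
  · intro x t ht hx hpos
    -- sign
    set s : ℝ := if 0 < x then 1 else -1 with hs_def
    have hs : s = 1 ∨ s = -1 := by
      by_cases h : 0 < x <;> simp [hs_def, h]
    have hsx : 0 < s * x := by
      by_cases h : 0 < x
      · simp only [hs_def, if_pos h]; linarith
      · have hx' : x < 0 := lt_of_le_of_ne (not_lt.mp h) hx
        simp only [hs_def, if_neg h]; nlinarith
    have habs : ∀ ξ : ℝ, 0 < s * ξ → |ξ| = s * ξ := by
      intro ξ h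
      rcases hs with h1 | h1 <;> rw [h1] at h ⊢
      · rw [one_mul] at h ⊢; exact abs_of_pos h
      · have : ξ < 0 := by nlinarith
        rw [abs_of_neg this]; ring
    set E := Real.exp (-c * t) with hE_def
    have hE : 0 < E := Real.exp_pos _
    set C := (E / x₀) ^ α with hC_def
    have hC : 0 < C := Real.rpow_pos_of_pos (div_pos hE hx₀) _
    set b : ℝ → ℝ := fun ξ => C * (s * ξ) ^ α with hb_def
    have hbval : ∀ ξ : ℝ, 0 < s * ξ → b ξ = ((|ξ| / x₀) * E) ^ α := by
      intro ξ h
      have hrw : (|ξ| / x₀ * E) = (E / x₀) * (s * ξ) := by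
        rw [habs ξ h]; field_simp
      rw [hrw, Real.mul_rpow (div_pos hE hx₀).le h.le]
    set z : ℝ → ℝ := fun ξ => A - b ξ with hz_def
    set N : Set ℝ := {ξ | 0 < s * ξ} ∩ {ξ | 0 < z ξ} with hN_def
    have hbcont : Continuous b :=
      continuous_const.mul ((continuous_const.mul continuous_id).rpow_const
        fun _ => Or.inr hα.le)
    have hNopen : IsOpen N :=
      (isOpen_lt continuous_const (continuous_const.mul continuous_id)).inter
        (isOpen_lt continuous_const (continuous_const.sub hbcont))
    have hzx : z x = A - ((|x| / x₀) * E) ^ α := by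
      rw [show z x = A - b x from rfl, hbval x hsx]
    have hxN : x ∈ N := ⟨hsx, by simp only [mem_setOf_eq]; rw [hzx]; exact hpos⟩
    have hNmem : N ∈ 𝓝 x := hNopen.mem_nhds hxN
    set e := P * m with he_def
    have he1 : e - 1 = P := by rw [he_def, hP_def]; field_simp; ring
    have heα : e * α = 1 := by rw [he_def, hP_def, hα_def]; field_simp
    -- U ξ t ^ m = z ξ ^ e on N
    have hUmN : ∀ ξ ∈ N, U ξ t ^ m = z ξ ^ e := by
      intro ξ hξ
      have h1 : (0:ℝ) < s * ξ := hξ.1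
      have h2 : (0:ℝ) < z ξ := hξ.2
      rw [hU, ← hE_def, ← hbval ξ h1]
      have hzz : A - b ξ = z ξ := rfl
      rw [hzz, max_eq_left h2.le, he_def, Real.rpow_mul h2.le]
    -- derivative of b on N
    have hb' : ∀ ξ ∈ N, HasDerivAt b (α * b ξ / ξ) ξ := by
      intro ξ hξ
      have h1 : (0:ℝ) < s * ξ := hξ.1
      have hξ0 : ξ ≠ 0 := by
        intro h; rw [h, mul_zero] at h1; exact lt_irrefl 0 h1
      have h0 : HasDerivAt (fun y : ℝ => s * y) s ξ := by
        simpa using (hasDerivAt_id ξ).const_mul s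
      have h2 : HasDerivAt (fun y : ℝ => (s * y) ^ α) (s * α * (s * ξ) ^ (α - 1)) ξ :=
        h0.rpow_const (Or.inl h1.ne')
      have h3 := h2.const_mul C
      have hval : C * (s * α * (s * ξ) ^ (α - 1)) = α * b ξ / ξ := by
        show _ = α * (C * (s * ξ) ^ α) / ξ
        rw [Real.rpow_sub h1, Real.rpow_one]
        field_simp
        ring
        exact mul_inv_cancel₀ (by intro h; rw [h, zero_mul] at h1; exact lt_irrefl 0 h1)
      rw [hval] at h3
      exact h3
    have hz' : ∀ ξ ∈ N, HasDerivAt z (-(α * b ξ / ξ)) ξ := by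
      intro ξ hξ
      exact (hb' ξ hξ).const_sub A
    -- derivative of W = z ^ e on N
    have hW' : ∀ ξ ∈ N, HasDerivAt (fun y => z y ^ e) (-(b ξ * ξ⁻¹ * z ξ ^ P)) ξ := by
      intro ξ hξ
      have h2 : (0:ℝ) < z ξ := hξ.2
      have h : HasDerivAt (fun y => z y ^ e) (-(α * b ξ / ξ) * e * z ξ ^ (e - 1)) ξ :=
        (hz' ξ hξ).rpow_const (Or.inl h2.ne')
      have hval : -(α * b ξ / ξ) * e * z ξ ^ (e - 1) = -(b ξ * ξ⁻¹ * z ξ ^ P) := by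
        rw [he1,
          show -(α * b ξ / ξ) * e * z ξ ^ P = -((e * α) * (b ξ * ξ⁻¹ * z ξ ^ P)) by ring,
          heα, one_mul]
      rw [hval] at h
      exact h
    have hUmW : (fun ξ => U ξ t ^ m) =ᶠ[𝓝 x] fun ξ => z ξ ^ e :=
      eventuallyEq_of_mem hNmem hUmN
    have hdiff2 : DifferentiableAt ℝ (fun ξ => U ξ t ^ m) x :=
      hUmW.differentiableAt_iff.mpr (hW' x hxN).differentiableAt
    set W' : ℝ → ℝ := fun ξ => -(b ξ * ξ⁻¹ * z ξ ^ P) with hW'_def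
    have hderivW : deriv (fun ξ => U ξ t ^ m) =ᶠ[𝓝 x] W' :=
      hUmW.deriv.trans (eventuallyEq_of_mem hNmem fun ξ hξ => (hW' ξ hξ).deriv)
    -- second derivative
    have hb'x := hb' x hxN
    have hz'x := hz' x hxN
    have hZ : (0:ℝ) < z x := hxN.2
    have hB : (0:ℝ) < b x := mul_pos hC (Real.rpow_pos_of_pos hsx _)
    have hinv : HasDerivAt (fun y : ℝ => y⁻¹) (-(x ^ 2)⁻¹) x := hasDerivAt_inv hx
    have hzP : HasDerivAt (fun ξ => z ξ ^ P) (-(α * b x / x) * P * z x ^ (P - 1)) x :=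
      hz'x.rpow_const (Or.inl hZ.ne')
    have hW'' : HasDerivAt W'
        (-((α * b x / x * x⁻¹ + b x * -(x ^ 2)⁻¹) * z x ^ P
          + b x * x⁻¹ * (-(α * b x / x) * P * z x ^ (P - 1)))) x :=
      ((hb'x.mul hinv).mul hzP).neg
    have hdiff3 : DifferentiableAt ℝ (deriv fun ξ => U ξ t ^ m) x :=
      hderivW.differentiableAt_iff.mpr hW''.differentiableAt
    -- time derivative
    set g : ℝ → ℝ := fun τ => (|x| / x₀) * Real.exp (-c * τ) with hg_def
    have hgpos : ∀ τ : ℝ, 0 < g τ :=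
      fun τ => mul_pos (div_pos (abs_pos.mpr hx) hx₀) (Real.exp_pos _)
    have hgt : g t ^ α = b x := by
      rw [hbval x hsx]
    set V : ℝ → ℝ := fun τ => (A - g τ ^ α) ^ P with hV_def
    set M : Set ℝ := {τ | 0 < A - g τ ^ α} with hM_def
    have hMopen : IsOpen M := by
      apply isOpen_lt continuous_const
      apply Continuous.sub continuous_const
      exact (continuous_const.mul
        (Real.continuous_exp.comp (continuous_const.mul continuous_id))).rpow_const
        fun _ => Or.inr hα.le
    have htM : t ∈ M := by
      show 0 < A - g t ^ α
      rw [hgt]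
      exact hZ
    have hUV : ∀ τ ∈ M, U x τ = V τ := by
      intro τ hτ
      have hτ' : (0:ℝ) < A - g τ ^ α := hτ
      rw [hU]
      show (max (A - (|x| / x₀ * Real.exp (-c * τ)) ^ α) 0) ^ P = (A - g τ ^ α) ^ P
      rw [show (|x| / x₀ * Real.exp (-c * τ)) = g τ from rfl, max_eq_left hτ'.le]
    have huv : (fun τ => U x τ) =ᶠ[𝓝 t] V :=
      eventuallyEq_of_mem (hMopen.mem_nhds htM) hUV
    have hgd : HasDerivAt g ((|x| / x₀) * (Real.exp (-c * t) * -c)) t := by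
      have h0 : HasDerivAt (fun τ : ℝ => -c * τ) (-c) t := by
        simpa using (hasDerivAt_id t).const_mul (-c)
      have h1 := h0.exp
      have h2 := h1.const_mul (|x| / x₀)
      convert h2 using 1
    have hga : HasDerivAt (fun τ => g τ ^ α)
        ((|x| / x₀) * (Real.exp (-c * t) * -c) * α * g t ^ (α - 1)) t :=
      hgd.rpow_const (Or.inl (hgpos t).ne')
    have hVt : HasDerivAt V
        (-((|x| / x₀) * (Real.exp (-c * t) * -c) * α * g t ^ (α - 1)) * P
          * (A - g t ^ α) ^ (P - 1)) t := by
      exact (hga.const_sub A).rpow_const (p := P)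
        (Or.inl (by show A - g t ^ α ≠ 0; rw [hgt]; exact hZ.ne'))
    have hdiff1 : DifferentiableAt ℝ (fun τ => U x τ) t :=
      huv.differentiableAt_iff.mpr hVt.differentiableAt
    refine ⟨hdiff1, hdiff2, hdiff3, ?_⟩
    -- final identity
    have hit2 : iteratedDeriv 2 (fun ξ => U ξ t ^ m) x
        = -((α * b x / x * x⁻¹ + b x * -(x ^ 2)⁻¹) * z x ^ P
          + b x * x⁻¹ * (-(α * b x / x) * P * z x ^ (P - 1))) := by
      rw [iteratedDeriv_succ, iteratedDeriv_one, hderivW.deriv_eq, hW''.deriv]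
    have hdt : deriv (fun τ => U x τ) t
        = -((|x| / x₀) * (Real.exp (-c * t) * -c) * α * g t ^ (α - 1)) * P
          * (A - g t ^ α) ^ (P - 1) := by
      rw [huv.deriv_eq, hVt.deriv]
    rw [hdt, hit2]
    -- algebra
    have hzxv : A - g t ^ α = z x := by rw [hgt]
    have hGalg : g t ^ (α - 1) = b x / g t := by
      rw [Real.rpow_sub (hgpos t), Real.rpow_one, hgt]
    have hZP : z x ^ P = z x ^ (P - 1) * z x := by
      rw [← Real.rpow_add_one hZ.ne' (P - 1), sub_add_cancel]
    have hcA : c = z x + b x := by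
      rw [hc]
      show A = A - b x + b x
      ring
    have hgne : g t ≠ 0 := (hgpos t).ne'
    have hfac : |x| / x₀ * (Real.exp (-c * t) * -c) = g t * -c := by
      show _ = |x| / x₀ * Real.exp (-c * t) * -c
      ring
    rw [hzxv, hGalg, hZP, hfac, hcA]
    rw [hα_def, hP_def]
    have hm1' : m - 1 ≠ 0 := hm1.ne'
    field_simp
    ring
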